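/- Let a, b : (0, ∞) → ℝ be continuous with a(s) = -(n-r)·tanh(s) and b(s) = b_r·tanh^{1-r}(s), where n > r ≥ 1 and b_r ∈ (0, n-r). Let τ_λ be the solution of y' = a·y + b with τ_λ(λ) = 1, where λ > 0 satisfies tanh^r(λ) > b_r/(n-r). Then τ_λ'(λ) < 0, and τ_λ is positive and strictly decreasing on [λ, ∞), with 0 < τ_λ(s) ≤ 1 for all s ≥ λ. -/

import Mathlib

open Set Filter Topology

lemma tanh_pos_aux {x : ℝ} (hx : 0 < x) : 0 < Real.tanh x := by
  rw [Real.tanh_eq_sinh_div_cosh]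
  exact div_pos (Real.sinh_pos_iff.mpr hx) (Real.cosh_pos x)

lemma tanh_lt_one_aux (x : ℝ) : Real.tanh x < 1 := by
  rw [Real.tanh_eq_sinh_div_cosh]
  rw [div_lt_one (Real.cosh_pos x)]
  exact Real.sinh_lt_cosh x

lemma tanh_hasDerivAt (x : ℝ) : HasDerivAt Real.tanh (1 - Real.tanh x ^ 2) x := by
  have h := (Real.hasDerivAt_sinh x).div (Real.hasDerivAt_cosh x) (ne_of_gt (Real.cosh_pos x))
  have hfun : Real.tanh = fun y => Real.sinh y / Real.cosh y := by
    funext y; exact Real.tanh_eq_sinh_div_cosh y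
  have key : 1 - Real.tanh x ^ 2
      = (Real.cosh x * Real.cosh x - Real.sinh x * Real.sinh x) / Real.cosh x ^ 2 := by
    rw [Real.tanh_eq_sinh_div_cosh]
    have hc := (Real.cosh_pos x).ne'
    field_simp
  rw [key, hfun]
  exact h

/-- For the ODE y' = -(n-r)tanh(s)·y + b_r·tanh^{1-r}(s) with 0 < b_r < n-r, if
tanh^r(λ) > b_r/(n-r) and τ_λ solves the ODE with τ_λ(λ) = 1, then τ_λ'(λ) < 0 and
τ_λ is positive and strictly decreasing on [λ,∞), with 0 < τ_λ ≤ 1 there. -/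
theorem stmt_13 (n r : ℕ) (hr : 1 ≤ r) (hrn : r < n)
    (b_r : ℝ) (hbr : 0 < b_r) (hbr2 : b_r < (n:ℝ) - r)
    (lam : ℝ) (hlam : 0 < lam)
    (hlam2 : Real.tanh lam ^ r > b_r / ((n:ℝ) - r))
    (τ : ℝ → ℝ)
    (hode : ∀ s > (0:ℝ), HasDerivAt τ
      (-((n:ℝ) - r) * Real.tanh s * τ s + b_r / Real.tanh s ^ (r - 1)) s)
    (hτlam : τ lam = 1) :
    deriv τ lam < 0 ∧ StrictAntiOn τ (Set.Ici lam) ∧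
    ∀ s ≥ lam, 0 < τ s ∧ τ s ≤ 1 := by
  set k : ℝ := (n:ℝ) - r with hkdef
  have hk0 : 0 < k := lt_trans hbr hbr2
  have hrr : r - 1 + 1 = r := Nat.succ_pred_eq_of_pos hr
  -- the auxiliary function h
  set h : ℝ → ℝ := fun s => k * Real.tanh s ^ r * τ s - b_r with hhdef
  -- pow splitting
  have hpow : ∀ x : ℝ, Real.tanh x ^ r = Real.tanh x ^ (r - 1) * Real.tanh x := by
    intro x; conv_lhs => rw [← hrr, pow_succ]
  -- h lam > 0
  have hlam3 : b_r < k * Real.tanh lam ^ r := by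
    have := (div_lt_iff₀ hk0).mp hlam2
    linarith
  have hhlam : 0 < h lam := by
    simp only [hhdef, hτlam, mul_one]
    linarith
  -- key: if h s > 0 and s > 0 then the ODE rhs is negative
  have hneg : ∀ s : ℝ, 0 < s → 0 < h s →
      -k * Real.tanh s * τ s + b_r / Real.tanh s ^ (r - 1) < 0 := by
    intro s hs hh
    have ht : 0 < Real.tanh s := tanh_pos_aux hs
    have ht1 : (0:ℝ) < Real.tanh s ^ (r - 1) := pow_pos ht _
    have hh' : b_r < k * Real.tanh s ^ r * τ s := by
      simp only [hhdef] at hh; linarith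
    have : b_r / Real.tanh s ^ (r - 1) < k * Real.tanh s * τ s := by
      rw [div_lt_iff₀ ht1]
      calc b_r < k * Real.tanh s ^ r * τ s := hh'
        _ = k * Real.tanh s * τ s * Real.tanh s ^ (r - 1) := by rw [hpow]; ring
    linarith
  -- derivative of h
  have hhderiv : ∀ s : ℝ, 0 < s → HasDerivAt h
      (k * ((r : ℝ) * Real.tanh s ^ (r - 1) * (1 - Real.tanh s ^ 2)) * τ s
        + k * Real.tanh s ^ r *
          (-k * Real.tanh s * τ s + b_r / Real.tanh s ^ (r - 1))) s := by
    intro s hs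
    have h1 : HasDerivAt (fun y => k * Real.tanh y ^ r)
        (k * ((r : ℝ) * Real.tanh s ^ (r - 1) * (1 - Real.tanh s ^ 2))) s := by
      have := ((tanh_hasDerivAt s).fun_pow r).const_mul k
      convert this using 1 <;> ring
    have h2 := h1.fun_mul (hode s hs)
    have h3 := h2.sub_const b_r
    convert h3 using 1 <;> ring
  -- main claim: h s > 0 for all s ≥ lam
  have hmain : ∀ s : ℝ, lam ≤ s → 0 < h s := by
    by_contra hcon
    push_neg at hcon
    obtain ⟨s₁, hs₁, hs₁'⟩ := hcon
    set T : Set ℝ := Ici lam ∩ h ⁻¹' (Iic 0) with hTdef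
    have hTne : T.Nonempty := ⟨s₁, hs₁, hs₁'⟩
    have hTbdd : BddBelow T := ⟨lam, fun x hx => hx.1⟩
    have hcont : ContinuousOn h (Ici lam) := by
      intro x hx
      exact (hhderiv x (lt_of_lt_of_le hlam hx)).continuousAt.continuousWithinAt
    have hTclosed : IsClosed T :=
      hcont.preimage_isClosed_of_isClosed isClosed_Ici isClosed_Iic
    set s₀ : ℝ := sInf T with hs₀def
    have hs₀T : s₀ ∈ T := hTclosed.csInf_mem hTne hTbdd
    have hs₀lam : lam ≤ s₀ := hs₀T.1
    have hs₀pos : 0 < s₀ := lt_of_lt_of_le hlam hs₀lam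
    have hs₀ne : lam ≠ s₀ := by
      intro he
      have := hs₀T.2
      simp only [Set.mem_preimage, Set.mem_Iic, ← he] at this
      linarith
    have hs₀lt : lam < s₀ := lt_of_le_of_ne hs₀lam hs₀ne
    -- h > 0 on [lam, s₀)
    have hleft : ∀ t, lam ≤ t → t < s₀ → 0 < h t := by
      intro t h1 h2
      by_contra hc
      push_neg at hc
      have : t ∈ T := ⟨h1, hc⟩
      exact absurd (csInf_le hTbdd this) (not_le.mpr h2)
    -- h s₀ = 0
    have hle0 : h s₀ ≤ 0 := hs₀T.2
    have hge0 : 0 ≤ h s₀ := by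
      have hct : ContinuousWithinAt h (Iio s₀) s₀ :=
        (hhderiv s₀ hs₀pos).continuousAt.continuousWithinAt
      refine ge_of_tendsto hct ?_
      filter_upwards [eventually_nhdsWithin_of_eventually_nhds
        (eventually_gt_nhds hs₀lt), self_mem_nhdsWithin] with t h1 h2
      exact (hleft t h1.le h2).le
    have heq0 : h s₀ = 0 := le_antisymm hle0 hge0
    -- at s₀: τ s₀ > 0 and h'(s₀) > 0
    have ht₀ : 0 < Real.tanh s₀ := tanh_pos_aux hs₀pos
    have hτ₀ : 0 < τ s₀ := by
      have : k * Real.tanh s₀ ^ r * τ s₀ = b_r := by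
        simp only [hhdef] at heq0; linarith
      have hkt : 0 < k * Real.tanh s₀ ^ r := mul_pos hk0 (pow_pos ht₀ r)
      nlinarith
    -- ODE rhs at s₀ is 0
    have hD0 : -k * Real.tanh s₀ * τ s₀ + b_r / Real.tanh s₀ ^ (r - 1) = 0 := by
      have hb : k * Real.tanh s₀ ^ r * τ s₀ = b_r := by
        simp only [hhdef] at heq0; linarith
      have ht1 : (Real.tanh s₀ ^ (r - 1)) ≠ 0 := ne_of_gt (pow_pos ht₀ _)
      field_simp
      rw [← hb, hpow]
      ring
    have hd : HasDerivAt h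
        (k * ((r : ℝ) * Real.tanh s₀ ^ (r - 1) * (1 - Real.tanh s₀ ^ 2)) * τ s₀) s₀ := by
      have := hhderiv s₀ hs₀pos
      rwa [hD0, mul_zero, add_zero] at this
    have hdpos : 0 < k * ((r : ℝ) * Real.tanh s₀ ^ (r - 1) * (1 - Real.tanh s₀ ^ 2)) * τ s₀ := by
      have h1 : (0:ℝ) < (r:ℝ) := by exact_mod_cast hr
      have h2 : Real.tanh s₀ ^ 2 < 1 := by
        nlinarith [tanh_lt_one_aux s₀, ht₀]
      have h3 : (0:ℝ) < 1 - Real.tanh s₀ ^ 2 := by linarith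
      have h4 := pow_pos ht₀ (r - 1)
      exact mul_pos (mul_pos hk0 (mul_pos (mul_pos h1 h4) h3)) hτ₀
    -- contradiction via slope
    have hslope := hasDerivAt_iff_tendsto_slope.mp hd
    have hslope_pos : ∀ᶠ t in 𝓝[≠] s₀, 0 < slope h s₀ t :=
      hslope.eventually (eventually_gt_nhds hdpos)
    have hslope_pos' : ∀ᶠ t in 𝓝[<] s₀, 0 < slope h s₀ t :=
      hslope_pos.filter_mono (nhdsWithin_mono _ (fun t ht => ne_of_lt ht))
    have hlam_ev : ∀ᶠ t in 𝓝[<] s₀, lam < t :=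
      eventually_nhdsWithin_of_eventually_nhds (eventually_gt_nhds hs₀lt)
    obtain ⟨t, htsl, htlam, hts₀⟩ :=
      (hslope_pos'.and (hlam_ev.and self_mem_nhdsWithin)).exists
    have hts : t < s₀ := hts₀
    have hpos : 0 < h t := hleft t htlam.le hts
    have : slope h s₀ t = (h t - h s₀) / (t - s₀) := by
      rw [slope_def_field]
    rw [this, heq0, sub_zero] at htsl
    have htneg : t - s₀ < 0 := by linarith
    have : h t < 0 := by
      by_contra hc
      push_neg at hc
      have := div_nonpos_of_nonneg_of_nonpos hc htneg.le
      linarith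
    linarith
  -- now the conclusions
  have hderiv_neg : ∀ s : ℝ, lam ≤ s → deriv τ s < 0 := by
    intro s hs
    have hspos : 0 < s := lt_of_lt_of_le hlam hs
    rw [(hode s hspos).deriv]
    have := hneg s hspos (hmain s hs)
    linarith [this]
  have hτcont : ContinuousOn τ (Ici lam) := fun x hx =>
    (hode x (lt_of_lt_of_le hlam hx)).continuousAt.continuousWithinAt
  have hanti : StrictAntiOn τ (Ici lam) := by
    apply strictAntiOn_of_deriv_neg (convex_Ici lam) hτcont
    intro x hx
    rw [interior_Ici] at hx
    exact hderiv_neg x (le_of_lt hx)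
  refine ⟨hderiv_neg lam le_rfl, hanti, ?_⟩
  intro s hs
  constructor
  · have hh := hmain s hs
    have ht := tanh_pos_aux (lt_of_lt_of_le hlam hs)
    have hkt : 0 < k * Real.tanh s ^ r := mul_pos hk0 (pow_pos ht r)
    simp only [hhdef] at hh
    nlinarith
  · rcases eq_or_lt_of_le hs with he | hlt
    · rw [← he, hτlam]
    · have := hanti (self_mem_Ici) hs hlt
      rw [hτlam] at this
      linarith
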